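/- Let p ∈ frontier Z be a simple nondegenerate point with associated neighborhood U_p. Then the following four conditions are equivalent: (1) p is KŁ nondegenerate; (2) p is weakly KŁ nondegenerate; (3) there exist a compact set K ⊆ U_p that is a neighborhood of p and ρ > 0 such that the function α^K is Lebesgue integrable on (0, ρ); (4) there exist an open neighborhood U of p, ρ > 0, and a function a : ℝ → ℝ that is continuous and strictly positive on (0, ρ] with t ↦ (a t)⁻¹ Lebesgue integrable on (0, ρ), such that ‖∇f x‖ ≥ a (f x) for every x ∈ U with 0 < f x ≤ ρ. -/

import Mathlib

open Set MeasureTheory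

variable {n : ℕ}

noncomputable def alphaK (f : EuclideanSpace ℝ (Fin n) → ℝ)
    (K : Set (EuclideanSpace ℝ (Fin n))) (t : ℝ) : ℝ :=
  sSup {y : ℝ | ∃ x ∈ K, f x = t ∧ y = ‖gradient f x‖⁻¹}

def KLNondeg (f : EuclideanSpace ℝ (Fin n) → ℝ) (p : EuclideanSpace ℝ (Fin n)) : Prop :=
  ∃ ρ > (0:ℝ), ∃ U : Set (EuclideanSpace ℝ (Fin n)), IsOpen U ∧ p ∈ U ∧
    ∃ Ψ : ℝ → ℝ, Ψ 0 = 0 ∧ ContinuousOn Ψ (Ico 0 ρ) ∧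
      (∀ t ∈ Ioo (0:ℝ) ρ, DifferentiableAt ℝ Ψ t) ∧
      (∀ t ∈ Ioo (0:ℝ) ρ, 0 < deriv Ψ t) ∧
      ContinuousOn (deriv Ψ) (Ioo 0 ρ) ∧
      ∀ x ∈ U, 0 < f x → f x < ρ → 1 ≤ deriv Ψ (f x) * ‖gradient f x‖

def WeakKLNondeg (f : EuclideanSpace ℝ (Fin n) → ℝ) (p : EuclideanSpace ℝ (Fin n)) : Prop :=
  ∃ ρ > (0:ℝ), ∃ U : Set (EuclideanSpace ℝ (Fin n)), IsOpen U ∧ p ∈ U ∧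
    ∃ ψ : ℝ → ℝ, (∀ t, 0 ≤ ψ t) ∧ IntegrableOn ψ (Ioo 0 ρ) ∧
      ∃ D : Set ℝ, MeasurableSet D ∧ D ⊆ Ioo 0 ρ ∧ volume (Ioo 0 ρ \ D) = 0 ∧
        ∀ x ∈ U, f x ∈ D → 1 ≤ ψ (f x) * ‖gradient f x‖


open Filter Topology
open scoped ENNReal NNReal


theorem my_insertion {X : Type*} [MetricSpace X] (u : X → ℝ) (v : X → ENNReal)
    (hu : UpperSemicontinuous u) (hv : LowerSemicontinuous v)
    (hu0 : ∀ x, 0 ≤ u x) (huv : ∀ x, ENNReal.ofReal (u x) < v x) :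
    ∃ φ : X → ℝ, Continuous φ ∧ (∀ x, u x ≤ φ x) ∧ ∀ x, ENNReal.ofReal (φ x) ≤ v x := by
  classical
  set c : X → ℝ := fun i => if v i = ⊤ then u i + 1 else (u i + (v i).toReal) / 2 with hc
  have hulttop : ∀ i, v i ≠ ⊤ → u i < (v i).toReal := by
    intro i hi
    have h1 : (ENNReal.ofReal (u i)).toReal < (v i).toReal :=
      ENNReal.toReal_strict_mono hi (huv i)
    rwa [ENNReal.toReal_ofReal (hu0 i)] at h1
  have hc1 : ∀ i, u i < c i := by
    intro i
    by_cases hi : v i = ⊤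
    · simp [hc, hi]
    · simp only [hc, hi, if_false]
      linarith [hulttop i hi]
  have hc0 : ∀ i, 0 ≤ c i := fun i => le_of_lt (lt_of_le_of_lt (hu0 i) (hc1 i))
  have hc2 : ∀ i, ENNReal.ofReal (c i) < v i := by
    intro i
    by_cases hi : v i = ⊤
    · simp [hi]
    · rw [ENNReal.ofReal_lt_iff_lt_toReal (hc0 i) hi]
      simp only [hc, hi, if_false]
      linarith [hulttop i hi]
  set N : X → Set X := fun i => {x | u x < c i} ∩ {x | ENNReal.ofReal (c i) < v x} with hN
  have hNo : ∀ i, IsOpen (N i) := by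
    intro i
    exact (hu.isOpen_preimage (c i)).inter (hv.isOpen_preimage (ENNReal.ofReal (c i)))
  have hNmem : ∀ i, i ∈ N i := fun i => ⟨hc1 i, hc2 i⟩
  obtain ⟨ρ, hρ⟩ := PartitionOfUnity.exists_isSubordinate (s := univ) isClosed_univ N hNo
    (fun x _ => mem_iUnion.2 ⟨x, hNmem x⟩)
  have key : ∀ x : X, (u x ≤ ∑ᶠ i, ρ i x • c i) ∧
      ENNReal.ofReal (∑ᶠ i, ρ i x • c i) ≤ v x := by
    intro x
    have hfin : {i | x ∈ tsupport (ρ i)}.Finite := ρ.finite_tsupport x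
    set s : Finset X := hfin.toFinset with hs
    have hmem_s : ∀ i ∈ s, x ∈ N i := by
      intro i hi
      rw [hs, Set.Finite.mem_toFinset] at hi
      exact hρ i hi
    have hsupp2 : (Function.support fun i => ρ i x) ⊆ ↑s := by
      intro i hi
      rw [hs, Set.Finite.coe_toFinset]
      exact subset_closure hi
    have hsupp1 : (Function.support fun i => ρ i x • c i) ⊆ ↑s := by
      intro i hi
      apply hsupp2
      intro h
      apply hi
      simp [h]
    have h1 : ∑ᶠ i, ρ i x • c i = ∑ i ∈ s, ρ i x * c i := by
      rw [finsum_eq_sum_of_support_subset _ hsupp1]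
      rfl
    have hsum1 : ∑ i ∈ s, ρ i x = 1 := by
      rw [← finsum_eq_sum_of_support_subset _ hsupp2]
      exact ρ.sum_eq_one (mem_univ x)
    constructor
    · rw [h1]
      calc u x = (∑ i ∈ s, ρ i x) * u x := by rw [hsum1, one_mul]
        _ = ∑ i ∈ s, ρ i x * u x := by rw [Finset.sum_mul]
        _ ≤ ∑ i ∈ s, ρ i x * c i := by
            apply Finset.sum_le_sum
            intro i hi
            by_cases hzero : ρ i x = 0
            · simp [hzero]
            · exact mul_le_mul_of_nonneg_left (le_of_lt (hmem_s i hi).1) (ρ.nonneg i x)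
    · by_cases hvx : v x = ⊤
      · simp [hvx]
      · have hφle : ∑ᶠ i, ρ i x • c i ≤ (v x).toReal := by
          rw [h1]
          calc ∑ i ∈ s, ρ i x * c i ≤ ∑ i ∈ s, ρ i x * (v x).toReal := by
                apply Finset.sum_le_sum
                intro i hi
                by_cases hzero : ρ i x = 0
                · simp [hzero]
                · refine mul_le_mul_of_nonneg_left ?_ (ρ.nonneg i x)
                  have h2' : ENNReal.ofReal (c i) < v x := (hmem_s i hi).2
                  rw [ENNReal.ofReal_lt_iff_lt_toReal (hc0 i) hvx] at h2'
                  exact le_of_lt h2'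
            _ = (v x).toReal := by rw [← Finset.sum_mul, hsum1, one_mul]
        exact ENNReal.ofReal_le_of_le_toReal hφle
  exact ⟨fun x => ∑ᶠ i, ρ i x • c i,
    hρ.continuous_finsum_smul hNo (fun i => continuousOn_const),
    fun x => (key x).1, fun x => (key x).2⟩


section AuxAlpha
variable {f : EuclideanSpace ℝ (Fin n) → ℝ} {Up K : Set (EuclideanSpace ℝ (Fin n))}


variable {f : EuclideanSpace ℝ (Fin n) → ℝ} {Up K : Set (EuclideanSpace ℝ (Fin n))}

lemma grad_contOn (hf : Continuous f) (hC1 : ContDiffOn ℝ 1 f (f ⁻¹' {0})ᶜ) :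
    ContinuousOn (gradient f) (f ⁻¹' {0})ᶜ := by
  have hopen : IsOpen (f ⁻¹' {0})ᶜ := (isClosed_singleton.preimage hf).isOpen_compl
  have h := hC1.continuousOn_fderiv_of_isOpen hopen le_rfl
  exact (InnerProductSpace.toDual ℝ
    (EuclideanSpace ℝ (Fin n))).symm.continuous.comp_continuousOn h

lemma G_contAt (hf : Continuous f) (hC1 : ContDiffOn ℝ 1 f (f ⁻¹' {0})ᶜ)
    (hUp : IsOpen Up)
    (hsimple : ∀ x ∈ Up, f x ≠ 0 → gradient f x ≠ 0)
    {x : EuclideanSpace ℝ (Fin n)} (hx : f x ≠ 0) (hxUp : x ∈ Up) :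
    ContinuousAt (fun z => ‖gradient f z‖⁻¹) x := by
  have hopen : IsOpen (f ⁻¹' {0})ᶜ := (isClosed_singleton.preimage hf).isOpen_compl
  have h1 : ContinuousAt (gradient f) x :=
    (grad_contOn hf hC1).continuousAt (hopen.mem_nhds (by simpa using hx))
  exact (h1.norm).inv₀ (norm_ne_zero_iff.2 (hsimple x hxUp hx))

lemma Sset_eq_image (f : EuclideanSpace ℝ (Fin n) → ℝ) (K : Set (EuclideanSpace ℝ (Fin n)))
    (t : ℝ) : {y : ℝ | ∃ x ∈ K, f x = t ∧ y = ‖gradient f x‖⁻¹} =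
      (fun x => ‖gradient f x‖⁻¹) '' {x ∈ K | f x = t} := by
  ext y
  constructor
  · rintro ⟨x, hxK, hxt, rfl⟩; exact ⟨x, ⟨hxK, hxt⟩, rfl⟩
  · rintro ⟨x, ⟨hxK, hxt⟩, rfl⟩; exact ⟨x, hxK, hxt, rfl⟩

lemma bddAbove_Sset (hf : Continuous f) (hC1 : ContDiffOn ℝ 1 f (f ⁻¹' {0})ᶜ)
    (hUp : IsOpen Up) (hsimple : ∀ x ∈ Up, f x ≠ 0 → gradient f x ≠ 0)
    (hK : IsCompact K) (hKUp : K ⊆ Up) {t : ℝ} (ht : t ≠ 0) :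
    BddAbove {y : ℝ | ∃ x ∈ K, f x = t ∧ y = ‖gradient f x‖⁻¹} := by
  rw [Sset_eq_image]
  have hcpt : IsCompact {x ∈ K | f x = t} := by
    have : {x ∈ K | f x = t} = K ∩ f ⁻¹' {t} := by ext x; simp [and_comm]
    rw [this]
    exact hK.inter_right (isClosed_singleton.preimage hf)
  refine hcpt.bddAbove_image ?_
  intro x hx
  exact (G_contAt hf hC1 hUp hsimple (hx.2 ▸ ht) (hKUp hx.1)).continuousWithinAt

lemma alphaK_nonneg (f : EuclideanSpace ℝ (Fin n) → ℝ) (K : Set (EuclideanSpace ℝ (Fin n)))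
    (t : ℝ) : 0 ≤ alphaK f K t := by
  apply Real.sSup_nonneg
  rintro y ⟨x, _, _, rfl⟩
  positivity

lemma le_alphaK (hf : Continuous f) (hC1 : ContDiffOn ℝ 1 f (f ⁻¹' {0})ᶜ)
    (hUp : IsOpen Up) (hsimple : ∀ x ∈ Up, f x ≠ 0 → gradient f x ≠ 0)
    (hK : IsCompact K) (hKUp : K ⊆ Up) {t : ℝ} (ht : t ≠ 0)
    {x : EuclideanSpace ℝ (Fin n)} (hxK : x ∈ K) (hxt : f x = t) :
    ‖gradient f x‖⁻¹ ≤ alphaK f K t :=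
  le_csSup (bddAbove_Sset hf hC1 hUp hsimple hK hKUp ht) ⟨x, hxK, hxt, rfl⟩

lemma usc_alphaK (hf : Continuous f) (hC1 : ContDiffOn ℝ 1 f (f ⁻¹' {0})ᶜ)
    (hUp : IsOpen Up) (hsimple : ∀ x ∈ Up, f x ≠ 0 → gradient f x ≠ 0)
    (hK : IsCompact K) (hKUp : K ⊆ Up) {t₀ : ℝ} (ht₀ : 0 < t₀) :
    UpperSemicontinuousAt (alphaK f K) t₀ := by
  intro y hy
  by_contra hcon
  rw [Metric.eventually_nhds_iff] at hcon
  push_neg at hcon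
  have hy0 : 0 < y := lt_of_le_of_lt (alphaK_nonneg f K t₀) hy
  set y' : ℝ := (alphaK f K t₀ + y) / 2 with hy'
  have hy'1 : alphaK f K t₀ < y' := by rw [hy']; linarith
  have hy'2 : y' < y := by rw [hy']; linarith
  have hchoice : ∀ k : ℕ, ∃ t, dist t t₀ < min (1 / ((k:ℝ) + 1)) t₀ ∧ ¬alphaK f K t < y := by
    intro k
    obtain ⟨t, h1, h2⟩ := hcon (min (1 / ((k:ℝ) + 1)) t₀) (lt_min (by positivity) ht₀)
    exact ⟨t, h1, not_lt.2 h2⟩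
  choose T hT1 hT2 using hchoice
  have hTpos : ∀ k, 0 < T k := by
    intro k
    have := lt_of_lt_of_le (hT1 k) (min_le_right _ _)
    rw [Real.dist_eq, abs_lt] at this
    linarith [this.1]
  have hTlim : Tendsto T atTop (𝓝 t₀) := by
    rw [tendsto_iff_dist_tendsto_zero]
    apply squeeze_zero (fun k => dist_nonneg)
      (fun k => le_of_lt (lt_of_lt_of_le (hT1 k) (min_le_left _ _)))
    exact tendsto_one_div_add_atTop_nhds_zero_nat
  have hex : ∀ k : ℕ, ∃ x ∈ K, f x = T k ∧ y' < ‖gradient f x‖⁻¹ := by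
    intro k
    have hle : y ≤ alphaK f K (T k) := not_lt.1 (hT2 k)
    have hne : {y : ℝ | ∃ x ∈ K, f x = T k ∧ y = ‖gradient f x‖⁻¹}.Nonempty := by
      by_contra hemp
      rw [not_nonempty_iff_eq_empty] at hemp
      have : alphaK f K (T k) = 0 := by rw [alphaK, hemp, Real.sSup_empty]
      linarith [hle, this]
    obtain ⟨b, ⟨x, hxK, hxt, rfl⟩, hb⟩ :=
      exists_lt_of_lt_csSup hne (lt_of_lt_of_le hy'2 hle)
    exact ⟨x, hxK, hxt, hb⟩
  choose X hX1 hX2 hX3 using hex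
  obtain ⟨x, hxK, σ, hσ, hXlim⟩ := hK.tendsto_subseq hX1
  have hfx : f x = t₀ := by
    have h1 : Tendsto (fun k => f (X (σ k))) atTop (𝓝 (f x)) :=
      (hf.continuousAt.tendsto).comp hXlim
    have h2 : Tendsto (fun k => f (X (σ k))) atTop (𝓝 t₀) := by
      have : (fun k => f (X (σ k))) = fun k => T (σ k) := by
        funext k; exact hX2 (σ k)
      rw [this]
      exact hTlim.comp hσ.tendsto_atTop
    exact tendsto_nhds_unique h1 h2
  have hGlim : Tendsto (fun k => ‖gradient f (X (σ k))‖⁻¹) atTop (𝓝 ‖gradient f x‖⁻¹) :=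
    ((G_contAt hf hC1 hUp hsimple (hfx ▸ ht₀.ne') (hKUp hxK)).tendsto).comp hXlim
  have hge : y' ≤ ‖gradient f x‖⁻¹ :=
    ge_of_tendsto hGlim (Eventually.of_forall (fun k => le_of_lt (hX3 (σ k))))
  have : ‖gradient f x‖⁻¹ ≤ alphaK f K t₀ :=
    le_alphaK hf hC1 hUp hsimple hK hKUp ht₀.ne' hxK hfx
  linarith

lemma meas_indicator_alphaK (hf : Continuous f) (hC1 : ContDiffOn ℝ 1 f (f ⁻¹' {0})ᶜ)
    (hUp : IsOpen Up) (hsimple : ∀ x ∈ Up, f x ≠ 0 → gradient f x ≠ 0)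
    (hK : IsCompact K) (hKUp : K ⊆ Up) {ρ : ℝ} :
    Measurable ((Ioo (0:ℝ) ρ).indicator (alphaK f K)) := by
  apply measurable_of_Iio
  intro cc
  have hA : IsOpen {t | t ∈ Ioo (0:ℝ) ρ ∧ alphaK f K t < cc} := by
    rw [isOpen_iff_mem_nhds]
    rintro t ⟨htI, htc⟩
    have h1 : ∀ᶠ s in 𝓝 t, alphaK f K s < cc :=
      usc_alphaK hf hC1 hUp hsimple hK hKUp htI.1 cc htc
    have h2 : ∀ᶠ s in 𝓝 t, s ∈ Ioo (0:ℝ) ρ := isOpen_Ioo.eventually_mem htI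
    filter_upwards [h1, h2] with s hs1 hs2
    exact ⟨hs2, hs1⟩
  have heq : (Ioo (0:ℝ) ρ).indicator (alphaK f K) ⁻¹' Iio cc =
      {t | t ∈ Ioo (0:ℝ) ρ ∧ alphaK f K t < cc} ∪ ((Ioo (0:ℝ) ρ)ᶜ ∩ {t : ℝ | (0:ℝ) < cc}) := by
    ext t
    by_cases ht : t ∈ Ioo (0:ℝ) ρ
    · simp only [mem_preimage, indicator_of_mem ht, mem_Iio, mem_union, mem_setOf_eq,
        mem_inter_iff, mem_compl_iff]
      exact ⟨fun h => Or.inl ⟨ht, h⟩, fun h => by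
        rcases h with h | h
        · exact h.2
        · exact absurd ht h.1⟩
    · simp only [mem_preimage, indicator_of_notMem ht, mem_Iio, mem_union, mem_setOf_eq,
        mem_inter_iff, mem_compl_iff]
      exact ⟨fun h => Or.inr ⟨ht, h⟩, fun h => by
        rcases h with h | h
        · exact absurd h.1 ht
        · exact h.2⟩
  rw [heq]
  exact (hA.measurableSet).union (measurableSet_Ioo.compl.inter (MeasurableSet.const _))

lemma aesm_alphaK (hf : Continuous f) (hC1 : ContDiffOn ℝ 1 f (f ⁻¹' {0})ᶜ)
    (hUp : IsOpen Up) (hsimple : ∀ x ∈ Up, f x ≠ 0 → gradient f x ≠ 0)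
    (hK : IsCompact K) (hKUp : K ⊆ Up) {ρ : ℝ} :
    AEStronglyMeasurable (alphaK f K) (volume.restrict (Ioo (0:ℝ) ρ)) := by
  have h := (meas_indicator_alphaK hf hC1 hUp hsimple hK hKUp (ρ := ρ)).aestronglyMeasurable
    (μ := volume.restrict (Ioo (0:ℝ) ρ))
  apply h.congr
  rw [Filter.EventuallyEq, ae_restrict_iff' measurableSet_Ioo]
  exact ae_of_all _ (fun t ht => indicator_of_mem ht _)


lemma imp12 (f : EuclideanSpace ℝ (Fin n) → ℝ) (p : EuclideanSpace ℝ (Fin n)) :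
    KLNondeg f p → WeakKLNondeg f p := by
  rintro ⟨ρ, hρ, U, hUo, hpU, Ψ, hΨ0, hΨc, hΨd, hΨpos, _, hKL⟩
  have h2 : (0:ℝ) < ρ/2 := by linarith
  have hsub : Ioo (0:ℝ) (ρ/2) ⊆ Ioo 0 ρ := Ioo_subset_Ioo le_rfl (by linarith)
  refine ⟨ρ/2, h2, U, hUo, hpU, (Ioo (0:ℝ) (ρ/2)).indicator (deriv Ψ), ?_, ?_,
    Ioo 0 (ρ/2), measurableSet_Ioo, subset_rfl, by simp, ?_⟩
  · intro t
    by_cases ht : t ∈ Ioo (0:ℝ) (ρ/2)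
    · rw [indicator_of_mem ht]; exact (hΨpos t (hsub ht)).le
    · rw [indicator_of_notMem ht]
  · have hInt : IntegrableOn (deriv Ψ) (Ioc 0 (ρ/2)) := by
      apply intervalIntegral.integrableOn_deriv_of_nonneg (g := Ψ)
      · exact hΨc.mono (Icc_subset_Ico_right (by linarith))
      · exact fun t ht => (hΨd t (hsub ht)).hasDerivAt
      · exact fun t ht => (hΨpos t (hsub ht)).le
    exact (hInt.mono_set Ioo_subset_Ioc_self).congr_fun
      (fun t ht => (indicator_of_mem ht _).symm) measurableSet_Ioo
  · intro x hxU hfD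
    rw [indicator_of_mem hfD]
    exact hKL x hxU hfD.1 (lt_trans hfD.2 (by linarith))


lemma imp41 (f : EuclideanSpace ℝ (Fin n) → ℝ) (p : EuclideanSpace ℝ (Fin n))
    (h4 : ∃ U : Set (EuclideanSpace ℝ (Fin n)), IsOpen U ∧ p ∈ U ∧
      ∃ ρ > (0:ℝ), ∃ a : ℝ → ℝ, ContinuousOn a (Ioc 0 ρ) ∧ (∀ t ∈ Ioc (0:ℝ) ρ, 0 < a t) ∧
        IntegrableOn (fun t => (a t)⁻¹) (Ioo 0 ρ) ∧
        ∀ x ∈ U, 0 < f x → f x ≤ ρ → a (f x) ≤ ‖gradient f x‖) :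
    KLNondeg f p := by
  obtain ⟨U, hUo, hpU, ρ, hρ, a, hac, hapos, haint, ha⟩ := h4
  set w : ℝ → ℝ := (Ioo (0:ℝ) ρ).indicator (fun s => (a s)⁻¹) with hw
  have hwint : Integrable w volume := haint.integrable_indicator measurableSet_Ioo
  set Ψ : ℝ → ℝ := fun t => ∫ s in (0:ℝ)..t, w s with hΨ
  have hwcont : ∀ t ∈ Ioo (0:ℝ) ρ, ContinuousAt w t := by
    intro t ht
    have h1 : ContinuousAt a t := hac.continuousAt (Ioc_mem_nhds ht.1 ht.2)
    have h2 : ContinuousAt (fun s => (a s)⁻¹) t := h1.inv₀ (hapos t ⟨ht.1, ht.2.le⟩).ne'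
    apply h2.congr_of_eventuallyEq
    filter_upwards [isOpen_Ioo.eventually_mem ht] with s hs
    exact indicator_of_mem hs _
  have hder : ∀ t ∈ Ioo (0:ℝ) ρ, HasDerivAt Ψ (w t) t := by
    intro t ht
    exact intervalIntegral.integral_hasDerivAt_right (hwint.intervalIntegrable)
      ⟨univ, univ_mem, hwint.aestronglyMeasurable.restrict⟩ (hwcont t ht)
  have hderEq : ∀ t ∈ Ioo (0:ℝ) ρ, deriv Ψ t = w t := fun t ht => (hder t ht).deriv
  refine ⟨ρ, hρ, U, hUo, hpU, Ψ, ?_, ?_, ?_, ?_, ?_, ?_⟩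
  · simp [hΨ]
  · exact (intervalIntegral.continuous_primitive
      (fun _ _ => hwint.intervalIntegrable) 0).continuousOn
  · exact fun t ht => (hder t ht).differentiableAt
  · intro t ht
    rw [hderEq t ht, hw, indicator_of_mem ht]
    exact inv_pos.2 (hapos t ⟨ht.1, ht.2.le⟩)
  · intro t ht
    apply ContinuousAt.continuousWithinAt
    apply (hwcont t ht).congr_of_eventuallyEq
    filter_upwards [isOpen_Ioo.eventually_mem ht] with s hs
    exact (hderEq s hs)
  · intro x hxU h0 hlt
    have hmem : f x ∈ Ioo (0:ℝ) ρ := ⟨h0, hlt⟩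
    rw [hderEq _ hmem, hw, indicator_of_mem hmem]
    have hpos : 0 < a (f x) := hapos _ ⟨h0, hlt.le⟩
    have hle : a (f x) ≤ ‖gradient f x‖ := ha x hxU h0 hlt.le
    rw [← inv_mul_cancel₀ hpos.ne']
    exact mul_le_mul_of_nonneg_left hle (by positivity)

lemma imp23 (hf : Continuous f) (hC1 : ContDiffOn ℝ 1 f (f ⁻¹' {0})ᶜ)
    (hUp : IsOpen Up) (hsimple : ∀ x ∈ Up, f x ≠ 0 → gradient f x ≠ 0)
    {p : EuclideanSpace ℝ (Fin n)} (hpUp : p ∈ Up)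
    (h2 : WeakKLNondeg f p) :
    ∃ K : Set (EuclideanSpace ℝ (Fin n)), IsCompact K ∧ K ⊆ Up ∧ K ∈ nhds p ∧
      ∃ ρ > (0:ℝ), IntegrableOn (alphaK f K) (Ioo 0 ρ) := by
  obtain ⟨ρ, hρ, U, hUo, hpU, ψ, hψ0, hψint, D, hDm, hDsub, hDnull, hW⟩ := h2
  obtain ⟨r, hr, hball⟩ := Metric.nhds_basis_closedBall.mem_iff.1
    ((hUp.inter hUo).mem_nhds ⟨hpUp, hpU⟩)
  set K := Metric.closedBall p r with hKdef
  have hK : IsCompact K := isCompact_closedBall p r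
  have hKUp : K ⊆ Up := fun x hx => (hball hx).1
  have hKU : K ⊆ U := fun x hx => (hball hx).2
  refine ⟨K, hK, hKUp, Metric.closedBall_mem_nhds p hr, ρ, hρ, ?_⟩
  have hD : ∀ᵐ t ∂volume.restrict (Ioo (0:ℝ) ρ), t ∈ D := by
    rw [ae_restrict_iff' measurableSet_Ioo, ae_iff]
    apply measure_mono_null _ hDnull
    intro t ht
    simp only [mem_setOf_eq, Classical.not_imp] at ht
    exact ⟨ht.1, ht.2⟩
  apply Integrable.mono' hψint (aesm_alphaK hf hC1 hUp hsimple hK hKUp)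
  filter_upwards [hD] with t htD
  rw [Real.norm_of_nonneg (alphaK_nonneg f K t)]
  apply Real.sSup_le _ (hψ0 t)
  rintro y ⟨x, hxK, hxt, rfl⟩
  have ht0 : (0:ℝ) < t := (hDsub htD).1
  have hgne : gradient f x ≠ 0 := hsimple x (hKUp hxK) (by rw [hxt]; exact ht0.ne')
  have hn : 0 < ‖gradient f x‖ := norm_pos_iff.2 hgne
  have h1 : 1 ≤ ψ t * ‖gradient f x‖ := by
    have := hW x (hKU hxK) (by rw [hxt]; exact htD)
    rwa [hxt] at this
  rw [inv_eq_one_div, div_le_iff₀ hn]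
  exact h1


lemma imp34 (hf : Continuous f) (hC1 : ContDiffOn ℝ 1 f (f ⁻¹' {0})ᶜ)
    (hUp : IsOpen Up) (hsimple : ∀ x ∈ Up, f x ≠ 0 → gradient f x ≠ 0)
    {p : EuclideanSpace ℝ (Fin n)}
    (h3 : ∃ K : Set (EuclideanSpace ℝ (Fin n)), IsCompact K ∧ K ⊆ Up ∧ K ∈ nhds p ∧
      ∃ ρ > (0:ℝ), IntegrableOn (alphaK f K) (Ioo 0 ρ)) :
    ∃ U : Set (EuclideanSpace ℝ (Fin n)), IsOpen U ∧ p ∈ U ∧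
      ∃ ρ > (0:ℝ), ∃ a : ℝ → ℝ, ContinuousOn a (Ioc 0 ρ) ∧ (∀ t ∈ Ioc (0:ℝ) ρ, 0 < a t) ∧
        IntegrableOn (fun t => (a t)⁻¹) (Ioo 0 ρ) ∧
        ∀ x ∈ U, 0 < f x → f x ≤ ρ → a (f x) ≤ ‖gradient f x‖ := by
  obtain ⟨K, hK, hKUp, hKnp, ρ, hρ, hint⟩ := h3
  set μ := volume.restrict (Ioo (0:ℝ) ρ) with hμ
  set h₀ : ℝ → ℝ := (Ioo (0:ℝ) ρ).indicator (alphaK f K) with hh₀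
  have h₀meas : Measurable h₀ := meas_indicator_alphaK hf hC1 hUp hsimple hK hKUp
  have h₀nonneg : ∀ t, 0 ≤ h₀ t := by
    intro t
    rw [hh₀]
    by_cases ht : t ∈ Ioo (0:ℝ) ρ
    · rw [indicator_of_mem ht]; exact alphaK_nonneg f K t
    · rw [indicator_of_notMem ht]
  set fnn : ℝ → NNReal := fun t => (h₀ t).toNNReal + 1 with hfnn
  have fnnmeas : Measurable fnn := h₀meas.real_toNNReal.add measurable_const
  have hcoe : ∀ t, ((fnn t : ℝ≥0∞)) = ENNReal.ofReal (h₀ t) + 1 := by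
    intro t
    simp only [hfnn, ENNReal.ofReal]
    push_cast
    ring
  have hfin : ∫⁻ t, (fnn t : ℝ≥0∞) ∂μ < ⊤ := by
    have hb : ∀ t, ((fnn t : ℝ≥0∞)) ≤ (‖alphaK f K t‖₊ : ℝ≥0∞) + 1 := by
      intro t
      rw [hcoe t]
      gcongr
      rw [hh₀]
      by_cases ht : t ∈ Ioo (0:ℝ) ρ
      · rw [indicator_of_mem ht, ← enorm_eq_nnnorm, Real.enorm_eq_ofReal (alphaK_nonneg f K t)]
      · rw [indicator_of_notMem ht]; simp
    calc ∫⁻ t, (fnn t : ℝ≥0∞) ∂μ ≤ ∫⁻ t, ((‖alphaK f K t‖₊ : ℝ≥0∞) + 1) ∂μ :=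
          lintegral_mono hb
      _ = (∫⁻ t, (‖alphaK f K t‖₊ : ℝ≥0∞) ∂μ) + 1 * μ univ := by
          rw [lintegral_add_right _ measurable_const, lintegral_const]
      _ < ⊤ := by
          apply ENNReal.add_lt_top.2
          constructor
          · exact hint.2
          · rw [one_mul, hμ, Measure.restrict_apply_univ]
            exact measure_Ioo_lt_top
  obtain ⟨g, hg_lt, hg_lsc, hg_int⟩ :=
    exists_lt_lowerSemicontinuous_lintegral_ge μ fnn fnnmeas (ε := 1) one_ne_zero
  have hgfin : ∫⁻ t, g t ∂μ < ⊤ :=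
    lt_of_le_of_lt hg_int (ENNReal.add_lt_top.2 ⟨hfin, ENNReal.one_lt_top⟩)
  set u : (Ioo (0:ℝ) ρ) → ℝ := fun t => max (alphaK f K ↑t) 1 with hu
  set v : (Ioo (0:ℝ) ρ) → ℝ≥0∞ := fun t => g ↑t with hv
  have hval : ∀ x₀ : Ioo (0:ℝ) ρ, Tendsto (Subtype.val : Ioo (0:ℝ) ρ → ℝ) (𝓝 x₀) (𝓝 ↑x₀) :=
    fun x₀ => continuous_subtype_val.continuousAt
  have husc : UpperSemicontinuous u := by
    intro x₀ y hy
    have h1 : alphaK f K ↑x₀ < y := lt_of_le_of_lt (le_max_left _ _) hy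
    have h2 : (1:ℝ) < y := lt_of_le_of_lt (le_max_right _ _) hy
    have h3 := usc_alphaK hf hC1 hUp hsimple hK hKUp x₀.2.1 y h1
    filter_upwards [(hval x₀).eventually h3] with t ht
    exact max_lt ht h2
  have hlsc : LowerSemicontinuous v := by
    intro x₀ y hy
    filter_upwards [(hval x₀).eventually (hg_lsc ↑x₀ y hy)] with t ht
    exact ht
  have hu0 : ∀ x, 0 ≤ u x := fun x => le_trans zero_le_one (le_max_right _ _)
  have huv : ∀ x : Ioo (0:ℝ) ρ, ENNReal.ofReal (u x) < v x := by
    intro x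
    have h1 : u x ≤ h₀ ↑x + 1 := by
      rw [hh₀, indicator_of_mem x.2]
      exact max_le (by linarith [alphaK_nonneg f K (↑x : ℝ)])
        (by linarith [alphaK_nonneg f K (↑x : ℝ)])
    calc ENNReal.ofReal (u x) ≤ ENNReal.ofReal (h₀ ↑x + 1) := ENNReal.ofReal_le_ofReal h1
      _ = (fnn ↑x : ℝ≥0∞) := by
          rw [hcoe ↑x, ENNReal.ofReal_add (h₀nonneg ↑x) zero_le_one, ENNReal.ofReal_one]
      _ < g ↑x := hg_lt ↑x
  obtain ⟨φ, hφc, hφu, hφv⟩ := my_insertion u v husc hlsc hu0 huv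
  have hφpos : ∀ x : Ioo (0:ℝ) ρ, 0 < φ x :=
    fun x => lt_of_lt_of_le (lt_of_lt_of_le one_pos (le_max_right _ _)) (hφu x)
  have hρ2 : (0:ℝ) < ρ/2 := by linarith
  have hsub : Ioc (0:ℝ) (ρ/2) ⊆ Ioo 0 ρ := fun t ht => ⟨ht.1, lt_of_le_of_lt ht.2 (by linarith)⟩
  classical
  set a : ℝ → ℝ := fun t => if ht : t ∈ Ioo (0:ℝ) ρ then (φ ⟨t, ht⟩)⁻¹ else 1 with ha
  have haIoc : ContinuousOn a (Ioc 0 (ρ/2)) := by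
    rw [continuousOn_iff_continuous_restrict]
    have heq : (Ioc (0:ℝ) (ρ/2)).domRestrict a =
        fun t : Ioc (0:ℝ) (ρ/2) => (φ ⟨↑t, hsub t.2⟩)⁻¹ := by
      funext t
      simp only [domRestrict_apply, ha]
      rw [dif_pos (hsub t.2)]
    rw [heq]
    exact (hφc.comp (Continuous.subtype_mk continuous_subtype_val _)).inv₀
      (fun t => (hφpos _).ne')
  refine ⟨interior K, isOpen_interior, mem_interior_iff_mem_nhds.2 hKnp, ρ/2, hρ2, a,
    haIoc, ?_, ?_, ?_⟩
  · intro t ht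
    rw [ha]
    simp only
    rw [dif_pos (hsub ht)]
    exact inv_pos.2 (hφpos _)
  · constructor
    · apply ContinuousOn.aestronglyMeasurable _ measurableSet_Ioo
      exact (haIoc.mono Ioo_subset_Ioc_self).inv₀
        (fun t ht => by
          rw [ha]; simp only
          rw [dif_pos (hsub (Ioo_subset_Ioc_self ht))]
          exact (inv_pos.2 (hφpos _)).ne')
    · show (∫⁻ t in Ioo (0:ℝ) (ρ/2), (‖(a t)⁻¹‖₊ : ℝ≥0∞) ∂volume) < ⊤
      calc ∫⁻ t in Ioo (0:ℝ) (ρ/2), (‖(a t)⁻¹‖₊ : ℝ≥0∞) ∂volume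
          ≤ ∫⁻ t in Ioo (0:ℝ) (ρ/2), g t ∂volume := by
            apply lintegral_mono_ae
            rw [ae_restrict_iff' measurableSet_Ioo]
            apply ae_of_all
            intro t ht
            have htm : t ∈ Ioo (0:ℝ) ρ := ⟨ht.1, lt_trans ht.2 (by linarith)⟩
            have haeq : a t = (φ ⟨t, htm⟩)⁻¹ := by rw [ha]; simp only; rw [dif_pos htm]
            rw [haeq, inv_inv, ← enorm_eq_nnnorm, Real.enorm_eq_ofReal (hφpos ⟨t, htm⟩).le]
            exact hφv ⟨t, htm⟩
        _ ≤ ∫⁻ t in Ioo (0:ℝ) ρ, g t ∂volume := by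
            have hss : Ioo (0:ℝ) (ρ/2) ⊆ Ioo 0 ρ := Ioo_subset_Ioo le_rfl (by linarith)
            exact lintegral_mono' (Measure.restrict_mono hss le_rfl) le_rfl
        _ < ⊤ := hgfin
  · intro x hxint h0 hle
    have hmem : f x ∈ Ioo (0:ℝ) ρ := ⟨h0, lt_of_le_of_lt hle (by linarith)⟩
    have haeq : a (f x) = (φ ⟨f x, hmem⟩)⁻¹ := by rw [ha]; simp only; rw [dif_pos hmem]
    have hxK : x ∈ K := interior_subset hxint
    have hgne : gradient f x ≠ 0 := hsimple x (hKUp hxK) h0.ne'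
    have hn : 0 < ‖gradient f x‖ := norm_pos_iff.2 hgne
    have h1 : ‖gradient f x‖⁻¹ ≤ alphaK f K (f x) :=
      le_alphaK hf hC1 hUp hsimple hK hKUp h0.ne' hxK rfl
    have h2 : ‖gradient f x‖⁻¹ ≤ φ ⟨f x, hmem⟩ :=
      le_trans h1 (le_trans (le_max_left _ _) (hφu ⟨f x, hmem⟩))
    rw [haeq]
    have := inv_anti₀ (inv_pos.2 hn) h2
    rwa [inv_inv] at this


end AuxAlpha

theorem KL_characterization (n : ℕ) (hn : 1 ≤ n)
    (f : EuclideanSpace ℝ (Fin n) → ℝ)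
    (hf : Continuous f) (hf0 : ∀ x, 0 ≤ f x)
    (hZ : (f ⁻¹' {0}).Nonempty)
    (hC1 : ContDiffOn ℝ 1 f (f ⁻¹' {0})ᶜ)
    (p : EuclideanSpace ℝ (Fin n)) (hp : p ∈ frontier (f ⁻¹' {0}))
    (Up : Set (EuclideanSpace ℝ (Fin n))) (hUp : IsOpen Up) (hpUp : p ∈ Up)
    (hsimple : ∀ x ∈ Up, f x ≠ 0 → gradient f x ≠ 0) :
    List.TFAE [KLNondeg f p, WeakKLNondeg f p,
      (∃ K : Set (EuclideanSpace ℝ (Fin n)), IsCompact K ∧ K ⊆ Up ∧ K ∈ nhds p ∧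
        ∃ ρ > (0:ℝ), IntegrableOn (alphaK f K) (Ioo 0 ρ)),
      (∃ U : Set (EuclideanSpace ℝ (Fin n)), IsOpen U ∧ p ∈ U ∧
        ∃ ρ > (0:ℝ), ∃ a : ℝ → ℝ, ContinuousOn a (Ioc 0 ρ) ∧ (∀ t ∈ Ioc (0:ℝ) ρ, 0 < a t) ∧
          IntegrableOn (fun t => (a t)⁻¹) (Ioo 0 ρ) ∧
          ∀ x ∈ U, 0 < f x → f x ≤ ρ → a (f x) ≤ ‖gradient f x‖)] := by
  tfae_have 1 → 2 := imp12 f p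
  tfae_have 2 → 3 := imp23 hf hC1 hUp hsimple hpUp
  tfae_have 3 → 4 := imp34 hf hC1 hUp hsimple
  tfae_have 4 → 1 := imp41 f p
  tfae_finish
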